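/- Let U = T_D and let L be a relative involutive division on U. Let M_set ⊆ U and let J = { u + v | u ∈ M_set, v : Fin n → ℕ } be the semigroup ideal generated by M_set. Then J = ⋃_{l ∈ M_set} C(l) if and only if M_set is compliant, i.e. for all s, t ∈ U with t ∈ M_set, the unique element X(s,t) of U whose cone contains lcm(s,t) also belongs to M_set. -/

import Mathlib

/-- The degree of an exponent vector: the sum of the exponents. -/
def deg {n : ℕ} (u : Fin n → ℕ) : ℕ := ∑ i, u i

/-- The support of an exponent vector: the indices with nonzero exponent. -/
def supp {n : ℕ} (u : Fin n → ℕ) : Set (Fin n) := {i | u i ≠ 0}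

/-- Given an assignment `M` of multiplicative variables, the cone of `u` is the set
of all `u + v` where the support of `v` is contained in `M u`. -/
def cone {n : ℕ} (M : (Fin n → ℕ) → Set (Fin n)) (u : Fin n → ℕ) :
    Set (Fin n → ℕ) :=
  {w | ∃ v : Fin n → ℕ, supp v ⊆ M u ∧ w = u + v}

/-- Let `L` be a relative involutive division on `U = T_D`, `Mset ⊆ U` and `J`
the semigroup ideal generated by `Mset`. Then `J` equals the union of the cones
of the elements of `Mset` iff `Mset` is compliant: for all `s, t ∈ U` with
`t ∈ Mset`, the unique element `X(s,t)` of `U` whose cone contains `lcm(s,t)`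
(the pointwise maximum `s ⊔ t`) also belongs to `Mset`. -/
theorem ideal_eq_union_cones_iff_compliant (n D : ℕ) (hn : 1 ≤ n) (hD : 1 ≤ D)
    (M : (Fin n → ℕ) → Set (Fin n))
    (hcov : (⋃ u ∈ {u : Fin n → ℕ | deg u = D}, cone M u) =
      {w : Fin n → ℕ | D ≤ deg w})
    (hdisj : ∀ u v : Fin n → ℕ, deg u = D → deg v = D → u ≠ v →
      cone M u ∩ cone M v = ∅)
    (Mset : Set (Fin n → ℕ)) (hMset : Mset ⊆ {u : Fin n → ℕ | deg u = D}) :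
    {w : Fin n → ℕ | ∃ u ∈ Mset, ∃ v : Fin n → ℕ, w = u + v} =
        (⋃ l ∈ Mset, cone M l) ↔
      (∀ s t : Fin n → ℕ, deg s = D → t ∈ Mset →
        ∀ x : Fin n → ℕ, deg x = D → (s ⊔ t) ∈ cone M x → x ∈ Mset) := by
  constructor
  · intro hJ s t hs ht x hx hxc
    have hst : (s ⊔ t) ∈ {w : Fin n → ℕ | ∃ u ∈ Mset, ∃ v : Fin n → ℕ, w = u + v} := by
      refine ⟨t, ht, fun i => max (s i) (t i) - t i, funext fun i => ?_⟩
      simp only [Pi.sup_apply, Pi.add_apply]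
      omega
    rw [hJ] at hst
    simp only [Set.mem_iUnion] at hst
    obtain ⟨l, hl, hcl⟩ := hst
    by_cases h : x = l
    · exact h ▸ hl
    · exact absurd (Set.mem_inter hxc hcl)
        (by rw [hdisj x l hx (hMset hl) h]; exact Set.notMem_empty _)
  · intro hcomp
    ext w
    simp only [Set.mem_setOf_eq, Set.mem_iUnion]
    constructor
    · rintro ⟨u, hu, v, rfl⟩
      have huD : deg u = D := hMset hu
      have hdw : D ≤ deg (u + v) := by
        have : deg (u + v) = deg u + deg v := Finset.sum_add_distrib
        omega
      have hmem : (u + v) ∈ ⋃ x ∈ {u : Fin n → ℕ | deg u = D}, cone M x := by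
        rw [hcov]; exact hdw
      simp only [Set.mem_iUnion, Set.mem_setOf_eq] at hmem
      obtain ⟨x, hxD, v', hv', heq⟩ := hmem
      refine ⟨x, ?_, v', hv', heq⟩
      have hcone : (x ⊔ u) ∈ cone M x := by
        refine ⟨fun i => max (x i) (u i) - x i, ?_, funext fun i => ?_⟩
        · intro i hi
          have h1 : u i + v i = x i + v' i := by
            have := congrFun heq i; simpa using this
          have hi' : max (x i) (u i) - x i ≠ 0 := hi
          have hv'i : v' i ≠ 0 := by omega
          exact hv' hv'i
        · simp only [Pi.sup_apply, Pi.add_apply]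
          omega
      exact hcomp x u hxD hu x hxD hcone
    · rintro ⟨l, hl, v, _, rfl⟩
      exact ⟨l, hl, v, rfl⟩
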